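/- arXiv:1904.04157 — 2 statements merged into one kernel-verified Lean document; each statement's English description precedes it below -/
import Mathlib

section
/- Let 1 ≤ m ≤ n and let S⁰ be an m-positive symmetric n×n matrix. Then the Gårding cone K_m(n) coincides with the connected component of the set {S ∈ Sym(n) : T_m(S) > 0} that contains S⁰. -/
open Matrix

/-- The `p`-trace of a square real matrix: the sum of all `p × p` principal minors.
    `ptrace 0 S = 1`. -/
noncomputable def ptrace {ι : Type*} [Fintype ι] (p : ℕ) (S : Matrix ι ι ℝ) : ℝ := by
  classical
  exact ∑ t ∈ Finset.univ.powersetCard p,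
    (S.submatrix (Subtype.val : {x // x ∈ t} → ι) Subtype.val).det

theorem detCongrInst {α : Type*} [Fintype α] (i1 i2 : DecidableEq α) (M : Matrix α α ℝ) :
    @Matrix.det α i1 _ ℝ _ M = @Matrix.det α i2 _ ℝ _ M := by
  have : i1 = i2 := funext fun a => funext fun b => Subsingleton.elim _ _
  rw [this]

theorem ptrace_eq {n : ℕ} (p : ℕ) (S : Matrix (Fin n) (Fin n) ℝ) :
    ptrace p S = ∑ t ∈ Finset.univ.powersetCard p,
      (S.submatrix (Subtype.val : {x // x ∈ t} → Fin n) Subtype.val).det := by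
  unfold ptrace
  exact Finset.sum_congr rfl fun t _ => detCongrInst _ _ _

theorem ptrace_zero {n : ℕ} (S : Matrix (Fin n) (Fin n) ℝ) : ptrace 0 S = 1 := by
  rw [ptrace_eq]
  rw [Finset.powersetCard_zero]
  rw [Finset.sum_singleton]
  have : IsEmpty {x : Fin n // x ∈ (∅ : Finset (Fin n))} :=
    ⟨fun x => (Finset.notMem_empty _ x.2)⟩
  exact Matrix.det_isEmpty

theorem ptrace_one {n : ℕ} (p : ℕ) : ptrace p (1 : Matrix (Fin n) (Fin n) ℝ) = n.choose p := by
  rw [ptrace_eq]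
  have : ∀ t ∈ Finset.univ.powersetCard p,
      ((1 : Matrix (Fin n) (Fin n) ℝ).submatrix
        (Subtype.val : {x // x ∈ t} → Fin n) Subtype.val).det = 1 := by
    intro t _
    rw [Matrix.submatrix_one _ Subtype.val_injective, Matrix.det_one]
  rw [Finset.sum_congr rfl this, Finset.sum_const, Finset.card_powersetCard, Finset.card_univ,
    Fintype.card_fin, nsmul_eq_mul, mul_one]

theorem ptrace_smul {n : ℕ} (p : ℕ) (c : ℝ) (S : Matrix (Fin n) (Fin n) ℝ) :
    ptrace p (c • S) = c ^ p * ptrace p S := by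
  rw [ptrace_eq, ptrace_eq, Finset.mul_sum]
  refine Finset.sum_congr rfl fun t ht => ?_
  have hcard : Fintype.card {x : Fin n // x ∈ t} = p := by
    rw [Fintype.card_coe]
    exact (Finset.mem_powersetCard.mp ht).2
  rw [show (c • S).submatrix (Subtype.val : {x // x ∈ t} → Fin n) Subtype.val
      = c • (S.submatrix (Subtype.val : {x // x ∈ t} → Fin n) Subtype.val) from rfl,
    Matrix.det_smul, hcard]

theorem continuous_ptrace {n : ℕ} (p : ℕ) :
    Continuous fun S : Matrix (Fin n) (Fin n) ℝ => ptrace p S := by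
  have : (fun S : Matrix (Fin n) (Fin n) ℝ => ptrace p S)
      = fun S => ∑ t ∈ Finset.univ.powersetCard p,
        (S.submatrix (Subtype.val : {x // x ∈ t} → Fin n) Subtype.val).det := by
    funext S; exact ptrace_eq p S
  rw [this]
  refine continuous_finset_sum _ fun t _ => ?_
  exact Continuous.matrix_det (Continuous.matrix_submatrix continuous_id _ _)

theorem det_add_smul_one {n : ℕ} (S : Matrix (Fin n) (Fin n) ℝ) (t : ℝ) :
    Matrix.det (S + t • 1) = ∑ p ∈ Finset.range (n + 1), ptrace p S * t ^ (n - p) := by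
  classical
  -- Step A : multilinear expansion
  have expand : Matrix.det (S + t • 1)
      = ∑ s : Finset (Fin n),
          Matrix.det (Matrix.of (s.piecewise (t • (1 : Matrix (Fin n) (Fin n) ℝ)) S)) := by
    have h1 : S + t • 1 = t • (1 : Matrix (Fin n) (Fin n) ℝ) + S := add_comm _ _
    rw [h1]
    exact Matrix.detRowAlternating.toMultilinearMap.map_add_univ
      (t • (1 : Matrix (Fin n) (Fin n) ℝ)) S
  -- Step B : each summand
  have stepB : ∀ s : Finset (Fin n),
      Matrix.det (Matrix.of (s.piecewise (t • (1 : Matrix (Fin n) (Fin n) ℝ)) S))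
        = (S.submatrix (Subtype.val : {x // x ∈ sᶜ} → Fin n) Subtype.val).det
            * t ^ (n - sᶜ.card) := by
    intro s
    set M := Matrix.of (s.piecewise (t • (1 : Matrix (Fin n) (Fin n) ℝ)) S) with hM
    let e : {x : Fin n // x ∈ sᶜ} ⊕ {x : Fin n // ¬ x ∈ sᶜ} ≃ Fin n :=
      Equiv.sumCompl (· ∈ sᶜ)
    have hdet : Matrix.det (M.submatrix e e) = Matrix.det M :=
      Matrix.det_submatrix_equiv_self e M
    have hblocks : M.submatrix e e
        = Matrix.fromBlocks
            (S.submatrix (Subtype.val : {x // x ∈ sᶜ} → Fin n) Subtype.val)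
            (S.submatrix (Subtype.val : {x // x ∈ sᶜ} → Fin n)
              (Subtype.val : {x // ¬ x ∈ sᶜ} → Fin n))
            0
            (t • (1 : Matrix {x : Fin n // ¬ x ∈ sᶜ} {x : Fin n // ¬ x ∈ sᶜ} ℝ)) := by
      ext i j
      cases i with
      | inl a =>
        have ha : (a : Fin n) ∉ s := Finset.mem_compl.mp a.2
        cases j with
        | inl b =>
          simp only [Matrix.submatrix_apply, Matrix.fromBlocks_apply₁₁, e,
            Equiv.sumCompl_apply_inl, Equiv.sumCompl_apply_inr, hM, Matrix.of_apply]
          simp only [Finset.piecewise, if_neg ha]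
        | inr b =>
          simp only [Matrix.submatrix_apply, Matrix.fromBlocks_apply₁₂, e,
            Equiv.sumCompl_apply_inl, Equiv.sumCompl_apply_inr, hM, Matrix.of_apply]
          simp only [Finset.piecewise, if_neg ha]
      | inr a =>
        have ha : (a : Fin n) ∈ s := by
          have := a.2
          simpa [Finset.mem_compl, not_not] using this
        cases j with
        | inl b =>
          have hab : (a : Fin n) ≠ (b : Fin n) := by
            intro h
            exact a.2 (h ▸ b.2)
          simp only [Matrix.submatrix_apply, Matrix.fromBlocks_apply₂₁, e,
            Equiv.sumCompl_apply_inl, Equiv.sumCompl_apply_inr, hM, Matrix.of_apply]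
          simp only [Finset.piecewise, if_pos ha]
          simp [Matrix.smul_apply, Matrix.one_apply, hab]
        | inr b =>
          simp only [Matrix.submatrix_apply, Matrix.fromBlocks_apply₂₂, e,
            Equiv.sumCompl_apply_inl, Equiv.sumCompl_apply_inr, hM, Matrix.of_apply]
          simp only [Finset.piecewise, if_pos ha]
          simp only [Matrix.smul_apply, Matrix.one_apply, smul_eq_mul]
          by_cases h : a = b
          · subst h; simp
          · have : (a : Fin n) ≠ (b : Fin n) := fun hh => h (Subtype.ext hh)
            simp [h, this]
    have hcard : Fintype.card {x : Fin n // ¬ x ∈ sᶜ} = n - sᶜ.card := by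
      rw [Fintype.card_subtype_compl]
      simp only [Fintype.card_coe, Fintype.card_fin]
    rw [← hdet, hblocks, Matrix.det_fromBlocks_zero₂₁, Matrix.det_smul, Matrix.det_one,
      hcard, mul_one]
  rw [expand]
  rw [Finset.sum_congr rfl fun s _ => stepB s]
  -- Step C : reindex by complement
  have hreindex : ∑ s : Finset (Fin n),
      (S.submatrix (Subtype.val : {x // x ∈ sᶜ} → Fin n) Subtype.val).det * t ^ (n - sᶜ.card)
      = ∑ r : Finset (Fin n),
      (S.submatrix (Subtype.val : {x // x ∈ r} → Fin n) Subtype.val).det * t ^ (n - r.card) := by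
    exact Fintype.sum_bijective (fun s : Finset (Fin n) => sᶜ)
      (Function.Involutive.bijective fun s => compl_compl s) _ _ (fun s => rfl)
  rw [hreindex]
  -- Step D : group by cardinality
  have hfib : ∑ r ∈ (Finset.univ : Finset (Finset (Fin n))),
      (S.submatrix (Subtype.val : {x // x ∈ r} → Fin n) Subtype.val).det * t ^ (n - r.card)
      = ∑ p ∈ Finset.range (n + 1), ∑ r ∈ Finset.univ.filter (fun r : Finset (Fin n) => r.card = p),
        (S.submatrix (Subtype.val : {x // x ∈ r} → Fin n) Subtype.val).det * t ^ (n - r.card) := by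
    refine (Finset.sum_fiberwise_of_maps_to ?_ _).symm
    intro r _
    rw [Finset.mem_range, Nat.lt_succ_iff]
    exact (Finset.card_le_univ r).trans (by simp)
  rw [hfib]
  refine Finset.sum_congr rfl fun p hp => ?_
  have hfilter : Finset.univ.filter (fun r : Finset (Fin n) => r.card = p)
      = Finset.univ.powersetCard p := by
    rw [Finset.powersetCard_eq_filter, Finset.powerset_univ]
  rw [hfilter, ptrace_eq, Finset.sum_mul]
  refine Finset.sum_congr rfl fun r hr => ?_
  rw [(Finset.mem_powersetCard.mp hr).2]

noncomputable def polyP {n : ℕ} (S : Matrix (Fin n) (Fin n) ℝ) : Polynomial ℝ :=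
  ∑ p ∈ Finset.range (n + 1), Polynomial.C (ptrace p S) * Polynomial.X ^ (n - p)

theorem polyP_eval {n : ℕ} (S : Matrix (Fin n) (Fin n) ℝ) (t : ℝ) :
    (polyP S).eval t = Matrix.det (S + t • 1) := by
  rw [det_add_smul_one, polyP]
  simp [Polynomial.eval_finset_sum]

theorem polyP_coeff {n : ℕ} (S : Matrix (Fin n) (Fin n) ℝ) {p : ℕ} (hp : p ≤ n) :
    (polyP S).coeff (n - p) = ptrace p S := by
  rw [polyP, Polynomial.finset_sum_coeff]
  rw [Finset.sum_eq_single p]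
  · rw [Polynomial.coeff_C_mul, Polynomial.coeff_X_pow, if_pos rfl, mul_one]
  · intro q hq hqp
    rw [Polynomial.coeff_C_mul, Polynomial.coeff_X_pow, if_neg, mul_zero]
    rw [Finset.mem_range, Nat.lt_succ_iff] at hq
    omega
  · intro h
    exact absurd (Finset.mem_range.mpr (Nat.lt_succ_of_le hp)) h

theorem polyP_natDegree_le {n : ℕ} (S : Matrix (Fin n) (Fin n) ℝ) :
    (polyP S).natDegree ≤ n := by
  refine Polynomial.natDegree_sum_le_of_forall_le _ _ fun p _ => ?_
  exact (Polynomial.natDegree_C_mul_X_pow_le _ _).trans (Nat.sub_le _ _)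

theorem isHermitian_of_isSymm {n : ℕ} {S : Matrix (Fin n) (Fin n) ℝ} (hS : S.IsSymm) :
    S.IsHermitian := by
  unfold Matrix.IsHermitian
  ext i j
  rw [Matrix.conjTranspose_apply]
  simp only [star, RingHom.id_apply]
  exact congrFun (congrFun hS i) j

theorem polyP_eq_prod {n : ℕ} {S : Matrix (Fin n) (Fin n) ℝ} (hS : S.IsSymm) :
    ∃ μ : Fin n → ℝ, polyP S = ∏ i, (Polynomial.X + Polynomial.C (μ i)) := by
  have hH : S.IsHermitian := isHermitian_of_isSymm hS
  set U : Matrix (Fin n) (Fin n) ℝ := (Matrix.IsHermitian.eigenvectorUnitary hH : Matrix (Fin n) (Fin n) ℝ)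
  set μ : Fin n → ℝ := fun i => (RCLike.ofReal ∘ hH.eigenvalues) i with hμ
  refine ⟨μ, Polynomial.funext fun t => ?_⟩
  rw [polyP_eval]
  have hspec : S = U * Matrix.diagonal μ * star U := Matrix.IsHermitian.spectral_theorem hH
  have hUU : U * star U = 1 := (Matrix.mem_unitaryGroup_iff).mp
    (Matrix.IsHermitian.eigenvectorUnitary hH).2
  have key : S + t • 1 = U * (Matrix.diagonal μ + t • 1) * star U := by
    rw [mul_add, add_mul, ← hspec]
    congr 1
    rw [mul_smul_comm, smul_mul_assoc, mul_one, hUU]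
  rw [key, Matrix.det_mul, Matrix.det_mul, mul_comm (Matrix.det U), mul_assoc,
    ← Matrix.det_mul, hUU, Matrix.det_one, mul_one]
  rw [Matrix.smul_one_eq_diagonal, Matrix.diagonal_add, Matrix.det_diagonal]
  simp [Polynomial.eval_prod, add_comm]

theorem polyP_shift {n : ℕ} (S : Matrix (Fin n) (Fin n) ℝ) (t : ℝ) :
    polyP (S + t • 1) = (polyP S).comp (Polynomial.X + Polynomial.C t) := by
  refine Polynomial.funext fun x => ?_
  rw [Polynomial.eval_comp, polyP_eval, Polynomial.eval_add, Polynomial.eval_X,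
    Polynomial.eval_C, polyP_eval, add_smul, ← add_assoc]
  congr 1
  abel

theorem ptrace_add_smul_one {n : ℕ} (S : Matrix (Fin n) (Fin n) ℝ) (t : ℝ) {p : ℕ} (hp : p ≤ n) :
    ptrace p (S + t • 1)
      = ∑ q ∈ Finset.range (n + 1),
          ptrace q S * (t ^ ((n - q) - (n - p)) * ((n - q).choose (n - p) : ℝ)) := by
  rw [← polyP_coeff (S + t • 1) hp, polyP_shift, polyP]
  have hcomp : (∑ q ∈ Finset.range (n + 1), Polynomial.C (ptrace q S) * Polynomial.X ^ (n - q)).comp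
      (Polynomial.X + Polynomial.C t)
    = ∑ q ∈ Finset.range (n + 1),
        Polynomial.C (ptrace q S) * (Polynomial.X + Polynomial.C t) ^ (n - q) := by
    rw [Polynomial.sum_comp]
    refine Finset.sum_congr rfl fun q _ => ?_
    rw [Polynomial.mul_comp, Polynomial.C_comp, Polynomial.pow_comp, Polynomial.X_comp]
  rw [hcomp, Polynomial.finset_sum_coeff]
  refine Finset.sum_congr rfl fun q hq => ?_
  rw [Polynomial.coeff_C_mul, Polynomial.coeff_X_add_C_pow]

/-- The Gårding cone `K_m(n)`: real symmetric `n × n` matrices with `T_p > 0`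
    for `p = 1, …, m`. -/
noncomputable def gardingCone (n m : ℕ) : Set (Matrix (Fin n) (Fin n) ℝ) :=
  {S | S.IsSymm ∧ ∀ p, 1 ≤ p → p ≤ m → 0 < ptrace p S}

theorem isSymm_add_smul_one {n : ℕ} {S : Matrix (Fin n) (Fin n) ℝ} (hS : S.IsSymm) (t : ℝ) :
    (S + t • 1).IsSymm := by
  unfold Matrix.IsSymm
  rw [Matrix.transpose_add, Matrix.transpose_smul, Matrix.transpose_one, hS]

theorem add_smul_one_mem {n m : ℕ} (h2 : m ≤ n) {S : Matrix (Fin n) (Fin n) ℝ}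
    (hS : S ∈ gardingCone n m) {t : ℝ} (ht : 0 ≤ t) : S + t • 1 ∈ gardingCone n m := by
  refine ⟨isSymm_add_smul_one hS.1 t, fun p h1p hpm => ?_⟩
  have hpn : p ≤ n := hpm.trans h2
  rw [ptrace_add_smul_one S t hpn]
  refine Finset.sum_pos' ?_ ⟨p, Finset.mem_range.mpr (Nat.lt_succ_of_le hpn), ?_⟩
  · intro q hq
    rw [Finset.mem_range, Nat.lt_succ_iff] at hq
    by_cases hqp : q ≤ p
    · have h0 : 0 ≤ ptrace q S := by
        rcases Nat.eq_zero_or_pos q with h | h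
        · rw [h, ptrace_zero]; norm_num
        · exact le_of_lt (hS.2 q h (hqp.trans hpm))
      positivity
    · rw [Nat.choose_eq_zero_of_lt (by omega)]
      simp
  · rw [Nat.sub_self, pow_zero, Nat.choose_self]
    simpa using hS.2 p h1p hpm

theorem smul_mem_gardingCone {n m : ℕ} {S : Matrix (Fin n) (Fin n) ℝ}
    (hS : S ∈ gardingCone n m) {c : ℝ} (hc : 0 < c) : c • S ∈ gardingCone n m := by
  refine ⟨?_, fun p h1p hpm => ?_⟩
  · unfold Matrix.IsSymm
    rw [Matrix.transpose_smul, hS.1]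
  · rw [ptrace_smul]
    exact mul_pos (pow_pos hc p) (hS.2 p h1p hpm)

theorem one_mem_gardingCone {n m : ℕ} (h2 : m ≤ n) :
    (1 : Matrix (Fin n) (Fin n) ℝ) ∈ gardingCone n m := by
  refine ⟨?_, fun p h1p hpm => ?_⟩
  · unfold Matrix.IsSymm
    exact Matrix.transpose_one
  · rw [ptrace_one]
    exact_mod_cast Nat.choose_pos (hpm.trans h2)

theorem multiset_prod_pos {s : Multiset ℝ} (h : ∀ x ∈ s, 0 < x) : 0 < s.prod := by
  induction s using Multiset.induction_on with
  | empty => simp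
  | cons a s ih =>
    rw [Multiset.prod_cons]
    exact mul_pos (h a (Multiset.mem_cons_self a s))
      (ih fun x hx => h x (Multiset.mem_cons_of_mem hx))

theorem multiset_sum_pos {s : Multiset ℝ} (h : ∀ x ∈ s, 0 < x) (hs : s ≠ 0) : 0 < s.sum := by
  induction s using Multiset.induction_on with
  | empty => exact absurd rfl hs
  | cons a t ih =>
    rw [Multiset.sum_cons]
    by_cases h0 : t = 0
    · subst h0; simpa using h a (Multiset.mem_cons_self a 0)
    · exact add_pos (h a (Multiset.mem_cons_self a t))
        (ih (fun x hx => h x (Multiset.mem_cons_of_mem hx)) h0)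

theorem multiset_esymm_pos {s : Multiset ℝ} (hpos : ∀ x ∈ s, 0 < x) {k : ℕ}
    (hk : k ≤ Multiset.card s) : 0 < s.esymm k := by
  rw [Multiset.esymm]
  refine multiset_sum_pos ?_ ?_
  · intro x hx
    rw [Multiset.mem_map] at hx
    obtain ⟨t, ht, rfl⟩ := hx
    have hts : t ≤ s := (Multiset.mem_powersetCard.mp ht).1
    exact multiset_prod_pos fun y hy => hpos y (Multiset.mem_of_le hts hy)
  · rw [Ne, Multiset.map_eq_zero, ← Multiset.card_eq_zero, Multiset.card_powersetCard]
    exact Nat.pos_iff_ne_zero.mp (Nat.choose_pos hk)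

theorem key_pos {n m : ℕ} (h1 : 1 ≤ m) (h2 : m ≤ n) {S : Matrix (Fin n) (Fin n) ℝ}
    (hS : S.IsSymm) (h0 : ∀ p, 1 ≤ p → p ≤ m → 0 ≤ ptrace p S) (hm : 0 < ptrace m S) :
    ∀ p, 1 ≤ p → p ≤ m → 0 < ptrace p S := by
  obtain ⟨μ, hP⟩ := polyP_eq_prod hS
  set P := polyP S with hPdef
  set k := n - m with hk
  set h := Polynomial.derivative^[k] P with hh
  -- coefficients of h
  have hcoeff : ∀ p, p ≤ m → h.coeff (m - p) = ((n - p).descFactorial k : ℝ) * ptrace p S := by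
    intro p hpm
    rw [hh, Polynomial.coeff_iterate_derivative]
    have he : m - p + k = n - p := by omega
    rw [he, polyP_coeff S (hpm.trans h2), nsmul_eq_mul]
  have hnonneg : ∀ j, j ≤ m → 0 ≤ h.coeff j := by
    intro j hj
    have : h.coeff j = ((n - (m - j)).descFactorial k : ℝ) * ptrace (m - j) S := by
      have := hcoeff (m - j) (Nat.sub_le _ _)
      rwa [Nat.sub_sub_self hj] at this
    rw [this]
    rcases Nat.eq_zero_or_pos (m - j) with hz | hpos
    · rw [hz, ptrace_zero]; positivity
    · have := h0 (m - j) hpos (Nat.sub_le _ _)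
      positivity
  have hc0 : 0 < h.coeff 0 := by
    have := hcoeff m le_rfl
    rw [Nat.sub_self] at this
    rw [this]
    have hd : 0 < (n - m).descFactorial k :=
      Nat.pos_of_ne_zero fun hz => by
        have := Nat.descFactorial_eq_zero_iff_lt.mp hz; omega
    positivity
  have hcm : 0 < h.coeff m := by
    have := hcoeff 0 (Nat.zero_le _)
    rw [Nat.sub_zero, ptrace_zero, mul_one] at this
    rw [this]
    have hd : 0 < n.descFactorial k :=
      Nat.pos_of_ne_zero fun hz => by
        have := Nat.descFactorial_eq_zero_iff_lt.mp hz; omega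
    positivity
  have hPdegle : P.natDegree ≤ n := polyP_natDegree_le S
  have hdeg : h.natDegree = m := by
    refine le_antisymm ?_ (Polynomial.le_natDegree_of_ne_zero hcm.ne')
    rw [Polynomial.natDegree_le_iff_coeff_eq_zero]
    intro j hj
    rw [hh, Polynomial.coeff_iterate_derivative,
      Polynomial.coeff_eq_zero_of_natDegree_lt (by omega : P.natDegree < j + k), smul_zero]
  have hne : h ≠ 0 := fun hzero => by simp [hzero] at hc0
  -- root count
  have hProots : P.roots.card = n := by
    have hconv : P = ((Finset.univ.val.map fun i : Fin n => -μ i).map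
        fun a => Polynomial.X - Polynomial.C a).prod := by
      rw [hP, Finset.prod_eq_multiset_prod, Multiset.map_map]
      refine congrArg Multiset.prod (Multiset.map_congr rfl fun i _ => ?_)
      simp [sub_eq_add_neg]
    rw [hconv, Polynomial.roots_multiset_prod_X_sub_C]
    simp
  have hiter : ∀ j, n - j ≤ (Polynomial.derivative^[j] P).roots.card := by
    intro j
    induction j with
    | zero => simpa using hProots.ge
    | succ j ih =>
      have hstep := Polynomial.card_roots_le_derivative (Polynomial.derivative^[j] P)
      rw [show Polynomial.derivative (Polynomial.derivative^[j] P)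
          = Polynomial.derivative^[j+1] P from
        (Function.iterate_succ_apply' _ _ _).symm] at hstep
      omega
  have hrootcard : h.roots.card = m := by
    refine le_antisymm (hdeg ▸ h.card_roots') ?_
    have hit := hiter k
    rw [← hh] at hit
    omega
  have hsplits : h.Splits := by
    rw [Polynomial.splits_iff_card_roots, hrootcard, hdeg]
  have hfact : h = Polynomial.C h.leadingCoeff *
      (h.roots.map fun a => Polynomial.X - Polynomial.C a).prod :=
    hsplits.eq_prod_roots
  have hrootsneg : ∀ r ∈ h.roots, r < 0 := by
    intro r hr
    by_contra hcon
    push_neg at hcon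
    have hev : h.eval r = 0 := (Polynomial.mem_roots'.mp hr).2
    have : 0 < h.eval r := by
      rw [Polynomial.eval_eq_sum_range, hdeg]
      refine Finset.sum_pos' ?_ ⟨0, Finset.mem_range.mpr (Nat.succ_pos _), ?_⟩
      · intro j hj
        rw [Finset.mem_range, Nat.lt_succ_iff] at hj
        have := hnonneg j hj
        positivity
      · simpa using hc0
    linarith
  -- final extraction
  set sm := h.roots.map (fun r : ℝ => -r) with hsm
  have hs_card : Multiset.card sm = m := by rw [hsm, Multiset.card_map, hrootcard]
  have hs_pos : ∀ x ∈ sm, 0 < x := by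
    intro x hx
    rw [hsm, Multiset.mem_map] at hx
    obtain ⟨r, hr, rfl⟩ := hx
    simpa using hrootsneg r hr
  have hprodeq : (h.roots.map fun a => Polynomial.X - Polynomial.C a).prod
      = (sm.map fun a => Polynomial.X + Polynomial.C a).prod := by
    rw [hsm, Multiset.map_map]
    refine congrArg Multiset.prod (Multiset.map_congr rfl fun r _ => ?_)
    simp [sub_eq_add_neg]
  have hlead : 0 < h.leadingCoeff := by
    rw [Polynomial.leadingCoeff, hdeg]; exact hcm
  intro p h1p hpm
  have hcoe : h.coeff (m - p) = h.leadingCoeff * sm.esymm p := by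
    conv_lhs => rw [hfact]
    rw [hprodeq, Polynomial.coeff_C_mul,
      Multiset.prod_X_add_C_coeff sm (by rw [hs_card]; omega), hs_card,
      Nat.sub_sub_self hpm]
  have hpos2 : 0 < h.coeff (m - p) := by
    rw [hcoe]
    exact mul_pos hlead (multiset_esymm_pos hs_pos (by rw [hs_card]; exact hpm))
  rw [hcoeff p hpm] at hpos2
  have hd : (0:ℝ) < ((n - p).descFactorial k : ℝ) := by
    have : (n - p).descFactorial k ≠ 0 := fun hz => by
      have := Nat.descFactorial_eq_zero_iff_lt.mp hz; omega
    exact_mod_cast Nat.pos_of_ne_zero this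
  nlinarith [hpos2, hd]

theorem joined_to_one {n m : ℕ} (h2 : m ≤ n) {S : Matrix (Fin n) (Fin n) ℝ}
    (hS : S ∈ gardingCone n m) : JoinedIn (gardingCone n m) S 1 := by
  have j1 : JoinedIn (gardingCone n m) S (S + 1) := by
    refine ⟨⟨⟨fun u : unitInterval => S + (u : ℝ) • 1, ?_⟩, ?_, ?_⟩, fun u => ?_⟩
    · exact continuous_const.add (continuous_subtype_val.smul continuous_const)
    · show S + ((0 : unitInterval) : ℝ) • 1 = S
      norm_num
    · show S + ((1 : unitInterval) : ℝ) • 1 = S + 1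
      norm_num
    · exact add_smul_one_mem h2 hS u.2.1
  have j2 : JoinedIn (gardingCone n m) (S + 1) 1 := by
    refine ⟨⟨⟨fun u : unitInterval => (1 - (u : ℝ)) • S + 1, ?_⟩, ?_, ?_⟩, fun u => ?_⟩
    · exact ((continuous_const.sub continuous_subtype_val).smul continuous_const).add
        continuous_const
    · show (1 - ((0 : unitInterval) : ℝ)) • S + 1 = S + 1
      norm_num
    · show (1 - ((1 : unitInterval) : ℝ)) • S + 1 = 1
      norm_num
    · show (1 - (u : ℝ)) • S + 1 ∈ gardingCone n m
      rcases eq_or_lt_of_le u.2.2 with hu | hu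
      · rw [hu]
        simp only [sub_self, zero_smul, zero_add]
        exact one_mem_gardingCone h2
      · have hpos : (0 : ℝ) < 1 - (u : ℝ) := by linarith
        have := add_smul_one_mem h2 (smul_mem_gardingCone hS hpos) (zero_le_one (α := ℝ))
        simpa [one_smul] using this
  exact j1.trans j2

theorem gardingCone_isPathConnected {n m : ℕ} (h2 : m ≤ n) :
    IsPathConnected (gardingCone n m) :=
  ⟨1, one_mem_gardingCone h2, fun _ hy => (joined_to_one h2 hy).symm⟩

/-- For `1 ≤ m ≤ n` and an `m`-positive symmetric matrix `S⁰`, the Gårding cone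
`K_m(n)` coincides with the connected component of `{S ∈ Sym(n) : T_m(S) > 0}`
containing `S⁰`. -/
theorem gardingCone_eq_connectedComponentIn (n m : ℕ) (h1 : 1 ≤ m) (h2 : m ≤ n)
    (S0 : Matrix (Fin n) (Fin n) ℝ) (hS0 : S0 ∈ gardingCone n m) :
    gardingCone n m
      = connectedComponentIn
          {S : Matrix (Fin n) (Fin n) ℝ | S.IsSymm ∧ 0 < ptrace m S} S0 := by
  set A := {S : Matrix (Fin n) (Fin n) ℝ | S.IsSymm ∧ 0 < ptrace m S} with hA
  have hKA : gardingCone n m ⊆ A := fun S hs => ⟨hs.1, hs.2 m h1 le_rfl⟩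
  apply Set.Subset.antisymm
  · exact (gardingCone_isPathConnected h2).isConnected.isPreconnected.subset_connectedComponentIn
      hS0 hKA
  · set C := connectedComponentIn A S0 with hC
    have hCA : C ⊆ A := connectedComponentIn_subset _ _
    have hCpre : IsPreconnected C := isPreconnected_connectedComponentIn
    have hS0C : S0 ∈ C := mem_connectedComponentIn (hKA hS0)
    set u := {S : Matrix (Fin n) (Fin n) ℝ | ∀ p, 1 ≤ p → p ≤ m → 0 < ptrace p S} with hu_def
    set v := {S : Matrix (Fin n) (Fin n) ℝ | ∃ p, 1 ≤ p ∧ p ≤ m ∧ ptrace p S < 0} with hv_def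
    have hu : IsOpen u := by
      have hueq : u = ⋂ p ∈ Finset.Icc 1 m, {S : Matrix (Fin n) (Fin n) ℝ | 0 < ptrace p S} := by
        ext S
        simp only [hu_def, Set.mem_setOf_eq, Set.mem_iInter, Finset.mem_Icc]
        constructor
        · intro h p hp; exact h p hp.1 hp.2
        · intro h p hp1 hp2; exact h p ⟨hp1, hp2⟩
      rw [hueq]
      exact isOpen_biInter_finset fun p _ =>
        isOpen_lt continuous_const (continuous_ptrace p)
    have hv : IsOpen v := by
      have hveq : v = ⋃ p ∈ Finset.Icc 1 m, {S : Matrix (Fin n) (Fin n) ℝ | ptrace p S < 0} := by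
        ext S
        simp only [hv_def, Set.mem_setOf_eq, Set.mem_iUnion, Finset.mem_Icc]
        constructor
        · rintro ⟨p, hp1, hp2, hp3⟩; exact ⟨p, ⟨hp1, hp2⟩, hp3⟩
        · rintro ⟨p, ⟨hp1, hp2⟩, hp3⟩; exact ⟨p, hp1, hp2, hp3⟩
      rw [hveq]
      exact isOpen_biUnion fun p _ => isOpen_lt (continuous_ptrace p) continuous_const
    have hdisj : Disjoint u v := by
      rw [Set.disjoint_left]
      rintro S hSu ⟨p, hp1, hpm, hneg⟩
      exact absurd (hSu p hp1 hpm) (not_lt.mpr hneg.le)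
    have hsub : C ⊆ u ∪ v := by
      intro S hSC
      obtain ⟨hsym, hmpos⟩ := hCA hSC
      by_cases hv' : S ∈ v
      · exact Or.inr hv'
      · refine Or.inl ?_
        have h0 : ∀ p, 1 ≤ p → p ≤ m → 0 ≤ ptrace p S := by
          intro p hp1 hpm'
          by_contra hneg
          push_neg at hneg
          exact hv' ⟨p, hp1, hpm', hneg⟩
        exact key_pos h1 h2 hsym h0 hmpos
    have hCu : C ⊆ u :=
      hCpre.subset_left_of_subset_union hu hv hdisj hsub ⟨S0, hS0C, fun p a b => hS0.2 p a b⟩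
    intro S hSC
    exact ⟨(hCA hSC).1, hCu hSC⟩
end

section
/- If S is a real symmetric n×n matrix belonging to the Gårding cone K_m(n) for some 1 ≤ m ≤ n, then S has at least m strictly positive eigenvalues, counted with multiplicity. -/
open Matrix

section Aux

variable {R : Type*} [CommRing R] {ι : Type*} [Fintype ι] [DecidableEq ι]

private lemma det_piecewise_rows (d : ι → R) (M : Matrix ι ι R) (t : Finset ι) :
    (Matrix.of (t.piecewise (fun i => d i • (Pi.single i 1 : ι → R)) (fun i => M i))).det
      = (∏ i ∈ t, d i) *
        (M.submatrix (Subtype.val : {x // x ∈ tᶜ} → ι) Subtype.val).det := by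
  classical
  set c : ι → R := fun i => if i ∈ t then d i else 1 with hc
  set B : Matrix ι ι R :=
    Matrix.of (t.piecewise (fun i => (Pi.single i 1 : ι → R)) (fun i => M i)) with hBdef
  have hsplit : Matrix.of (t.piecewise (fun i => d i • (Pi.single i 1 : ι → R)) (fun i => M i))
      = Matrix.diagonal c * B := by
    ext i j
    by_cases h : i ∈ t
    · simp [Matrix.diagonal_mul, B, c, Finset.piecewise_eq_of_mem _ _ _ h, h]
    · simp [Matrix.diagonal_mul, B, c, Finset.piecewise_eq_of_notMem _ _ _ h, h]
  have hprod : (∏ i, c i) = ∏ i ∈ t, d i := by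
    rw [hc, Finset.prod_ite_mem, Finset.univ_inter]
  have hB : B.det = (M.submatrix (Subtype.val : {x // x ∈ tᶜ} → ι) Subtype.val).det := by
    set e : {x // x ∈ t} ⊕ {x // x ∈ tᶜ} ≃ ι :=
      (Equiv.sumCongr (Equiv.refl _) (Equiv.subtypeEquivRight fun x => Finset.mem_compl)).trans
        (Equiv.sumCompl (· ∈ t)) with he
    have he1 : ∀ i : {x // x ∈ t}, e (Sum.inl i) = (i : ι) := fun i => rfl
    have he2 : ∀ j : {x // x ∈ tᶜ}, e (Sum.inr j) = (j : ι) := fun j => rfl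
    rw [← Matrix.det_submatrix_equiv_self e B]
    have hblocks : B.submatrix e e = Matrix.fromBlocks 1 0
        (Matrix.of fun (i : {x // x ∈ tᶜ}) (j : {x // x ∈ t}) => M i j)
        (M.submatrix (Subtype.val : {x // x ∈ tᶜ} → ι) Subtype.val) := by
      ext i j
      cases i with
      | inl i =>
        have hi : (i : ι) ∈ t := i.2
        cases j with
        | inl j =>
          have hij : (i = j) ↔ ((j : ι) = (i : ι)) := by rw [Subtype.ext_iff, eq_comm]
          simp [Matrix.submatrix_apply, he1, B, Finset.piecewise_eq_of_mem _ _ _ hi,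
            Pi.single_apply, Matrix.one_apply, hij]
        | inr j =>
          have hj : (j : ι) ≠ (i : ι) := by
            intro h
            exact (Finset.mem_compl.mp j.2) (h ▸ hi)
          simp [Matrix.submatrix_apply, he1, he2, B, Finset.piecewise_eq_of_mem _ _ _ hi,
            Pi.single_apply, hj]
      | inr i =>
        have hi : (i : ι) ∉ t := Finset.mem_compl.mp i.2
        cases j with
        | inl j =>
          simp [Matrix.submatrix_apply, he1, he2, B, Finset.piecewise_eq_of_notMem _ _ _ hi]
        | inr j =>
          simp [Matrix.submatrix_apply, he2, B, Finset.piecewise_eq_of_notMem _ _ _ hi]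
    rw [hblocks, Matrix.det_fromBlocks_zero₁₂, Matrix.det_one, one_mul]
  rw [hsplit, Matrix.det_mul, Matrix.det_diagonal, hprod, hB]

private lemma det_diagonal_add (d : ι → R) (M : Matrix ι ι R) :
    (Matrix.diagonal d + M).det
      = ∑ t : Finset ι, (∏ i ∈ tᶜ, d i) *
          (M.submatrix (Subtype.val : {x // x ∈ t} → ι) Subtype.val).det := by
  classical
  have h1 : Matrix.diagonal d + M
      = Matrix.of ((fun i => d i • (Pi.single i 1 : ι → R)) + fun i => M i) := by
    ext i j
    by_cases h : i = j <;>
      simp [Matrix.diagonal_apply, Pi.single_apply, h, eq_comm]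
  have h2 : (Matrix.of ((fun i => d i • (Pi.single i 1 : ι → R)) + fun i => M i)).det
      = ∑ t : Finset ι,
          (Matrix.of (t.piecewise (fun i => d i • (Pi.single i 1 : ι → R)) (fun i => M i))).det :=
    MultilinearMap.map_add_univ Matrix.detRowAlternating.toMultilinearMap _ _
  rw [h1, h2]
  have h3 : ∀ t : Finset ι,
      (Matrix.of (t.piecewise (fun i => d i • (Pi.single i 1 : ι → R)) (fun i => M i))).det
        = (∏ i ∈ t, d i) *
          (M.submatrix (Subtype.val : {x // x ∈ tᶜ} → ι) Subtype.val).det :=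
    det_piecewise_rows d M
  calc (∑ t : Finset ι,
        (Matrix.of (t.piecewise (fun i => d i • (Pi.single i 1 : ι → R)) (fun i => M i))).det)
      = ∑ t : Finset ι, (∏ i ∈ t, d i) *
          (M.submatrix (Subtype.val : {x // x ∈ tᶜ} → ι) Subtype.val).det :=
        Finset.sum_congr rfl fun t _ => h3 t
    _ = ∑ t : Finset ι, (∏ i ∈ tᶜ, d i) *
          (M.submatrix (Subtype.val : {x // x ∈ t} → ι) Subtype.val).det := by
        refine Fintype.sum_bijective (fun t : Finset ι => tᶜ)
          (Function.Involutive.bijective fun t : Finset ι => compl_compl t) _ _ ?_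
        intro t
        rw [compl_compl]

end Aux

private lemma ptrace_def {ι : Type*} [Fintype ι] [DecidableEq ι] (p : ℕ) (S : Matrix ι ι ℝ) :
    ptrace p S = ∑ t ∈ Finset.univ.powersetCard p,
      (S.submatrix (Subtype.val : {x // x ∈ t} → ι) Subtype.val).det := by
  unfold ptrace
  congr!

open Polynomial in
private lemma ptrace_eq_sum_prod_eigenvalues (n : ℕ) (S : Matrix (Fin n) (Fin n) ℝ)
    (hS : S.IsHermitian) (p : ℕ) (hp : p ≤ n) :
    ptrace p S = ∑ t ∈ Finset.univ.powersetCard p, ∏ i ∈ t, hS.eigenvalues i := by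
  classical
  set μ := hS.eigenvalues with hμ
  set U : Matrix (Fin n) (Fin n) ℝ := ↑(hS.eigenvectorUnitary) with hU
  set Q : ℝ[X] := (Matrix.diagonal (fun _ : Fin n => (X : ℝ[X])) + S.map C).det with hQ
  have hcard : ∀ t : Finset (Fin n), t.card ≤ n := fun t => by
    simpa using Finset.card_le_univ t
  -- First expression for Q
  have hQ1 : Q = ∑ t : Finset (Fin n),
      X ^ (n - t.card) *
        C ((S.submatrix (Subtype.val : {x // x ∈ t} → Fin n) Subtype.val).det) := by
    rw [hQ, det_diagonal_add]
    refine Finset.sum_congr rfl fun t _ => ?_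
    rw [Finset.prod_const, Finset.card_compl, Fintype.card_fin]
    congr 1
    rw [Matrix.submatrix_map]
    exact (RingHom.map_det C _).symm
  have hcoeff1 : Q.coeff (n - p) = ptrace p S := by
    rw [hQ1, finset_sum_coeff]
    have hterm : ∀ t : Finset (Fin n),
        (X ^ (n - t.card) *
            C ((S.submatrix (Subtype.val : {x // x ∈ t} → Fin n) Subtype.val).det)).coeff (n - p)
          = if t.card = p then
              (S.submatrix (Subtype.val : {x // x ∈ t} → Fin n) Subtype.val).det else 0 := by
      intro t
      rw [mul_comm, coeff_C_mul, coeff_X_pow]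
      have := hcard t
      by_cases h : t.card = p
      · rw [if_pos (by omega), if_pos h, mul_one]
      · rw [if_neg (by omega), if_neg h, mul_zero]
    calc (∑ t : Finset (Fin n), (X ^ (n - t.card) *
            C ((S.submatrix (Subtype.val : {x // x ∈ t} → Fin n) Subtype.val).det)).coeff (n - p))
        = ∑ t : Finset (Fin n), if t.card = p then
            (S.submatrix (Subtype.val : {x // x ∈ t} → Fin n) Subtype.val).det else 0 :=
          Finset.sum_congr rfl fun t _ => hterm t
      _ = ∑ t ∈ Finset.univ.filter (fun t : Finset (Fin n) => t.card = p),
            (S.submatrix (Subtype.val : {x // x ∈ t} → Fin n) Subtype.val).det :=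
          (Finset.sum_filter _ _).symm
      _ = ∑ t ∈ Finset.univ.powersetCard p,
            (S.submatrix (Subtype.val : {x // x ∈ t} → Fin n) Subtype.val).det :=
          Finset.sum_congr (by rw [Finset.powersetCard_eq_filter, Finset.powerset_univ])
            (fun t _ => rfl)
      _ = ptrace p S := (ptrace_def p S).symm
  -- Second expression for Q
  have hQ2 : Q = ∏ i, (X + C (μ i)) := by
    have hUU : U * star U = 1 := Matrix.mem_unitaryGroup_iff.mp hS.eigenvectorUnitary.2
    have hUU' : star U * U = 1 := Matrix.mem_unitaryGroup_iff'.mp hS.eigenvectorUnitary.2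
    have hdiag : star U * S * U = Matrix.diagonal μ := by
      have h := hS.conjStarAlgAut_star_eigenvectorUnitary
      rw [Unitary.conjStarAlgAut_star_apply] at h
      simpa [RCLike.ofReal_real_eq_id] using h
    have key : (star U).map C * (Matrix.diagonal (fun _ : Fin n => (X : ℝ[X])) + S.map C) * U.map C
        = Matrix.diagonal (fun i => X + C (μ i)) := by
      have hD : Matrix.diagonal (fun _ : Fin n => (X : ℝ[X]))
          = (X : ℝ[X]) • (1 : Matrix (Fin n) (Fin n) ℝ[X]) :=
        (Matrix.smul_one_eq_diagonal _).symm
      rw [Matrix.mul_add, Matrix.add_mul, hD]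
      have h1 : (star U).map C * ((X : ℝ[X]) • (1 : Matrix (Fin n) (Fin n) ℝ[X])) * U.map C
          = (X : ℝ[X]) • (1 : Matrix (Fin n) (Fin n) ℝ[X]) := by
        rw [Matrix.mul_smul, Matrix.mul_one, Matrix.smul_mul, ← Matrix.map_mul, hUU',
          Matrix.map_one C (map_zero C) (map_one C)]
      have h2 : (star U).map C * (S.map C) * U.map C = Matrix.diagonal (fun i => C (μ i)) := by
        rw [← Matrix.map_mul, ← Matrix.map_mul, hdiag, Matrix.diagonal_map (map_zero C)]
      rw [h1, h2, Matrix.smul_one_eq_diagonal, Matrix.diagonal_add]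
    have hdet := congrArg Matrix.det key
    rw [Matrix.det_mul, Matrix.det_mul, Matrix.det_diagonal] at hdet
    have hone : ((star U).map C).det * ((U.map C)).det = 1 := by
      rw [← Matrix.det_mul, ← Matrix.map_mul, hUU',
        Matrix.map_one C (map_zero C) (map_one C), Matrix.det_one]
    calc Q = ((star U).map C).det * ((U.map C)).det * Q := by rw [hone, one_mul]
      _ = ((star U).map C).det * Q * ((U.map C)).det := by ring
      _ = ∏ i, (X + C (μ i)) := hdet
  have hcoeff2 : Q.coeff (n - p) = ∑ t ∈ Finset.univ.powersetCard p, ∏ i ∈ t, μ i := by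
    rw [hQ2, Finset.prod_X_add_C_coeff _ _ (by simpa using Nat.sub_le n p)]
    congr 1
    rw [Finset.card_univ, Fintype.card_fin, Nat.sub_sub_self hp]
  rw [← hcoeff1, hcoeff2]

private lemma esymm_cons_aux (a : ℝ) (t : Multiset ℝ) (p : ℕ) :
    (a ::ₘ t).esymm (p + 1) = t.esymm (p + 1) + a * t.esymm p := by
  rw [Multiset.esymm, Multiset.powersetCard_cons, Multiset.map_add, Multiset.sum_add,
    Multiset.map_map]
  congr 1
  rw [Multiset.esymm, ← Multiset.sum_map_mul_left]
  exact congrArg Multiset.sum (Multiset.map_congr rfl fun x _ => by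
    simp [Multiset.prod_cons])

private lemma core_esymm_pos (s : Multiset ℝ) : ∀ m : ℕ, m ≤ Multiset.card s →
    (∀ p, 1 ≤ p → p ≤ m → 0 < s.esymm p) →
    m ≤ Multiset.card (s.filter (fun x => 0 < x)) := by
  classical
  induction s using Multiset.strongInductionOn with
  | _ s ih =>
    intro m hcard hpos
    by_cases hall : ∀ x ∈ s, 0 < x
    · rwa [Multiset.filter_eq_self.mpr hall]
    · push_neg at hall
      obtain ⟨a, ha, ha0⟩ := hall
      set t := s.erase a with ht
      have hst : s = a ::ₘ t := (Multiset.cons_erase ha).symm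
      have htcard : Multiset.card t + 1 = Multiset.card s := by
        rw [hst]; simp
      have hts : t < s := Multiset.erase_lt.mpr ha
      have hkey : ∀ p, p ≤ m → 0 < t.esymm p := by
        intro p
        induction p with
        | zero =>
          intro _
          simp [Multiset.esymm, Multiset.powersetCard_zero_left]
        | succ q ihq =>
          intro hq
          have h1 : 0 < t.esymm q := ihq (by omega)
          have h2 : 0 < s.esymm (q + 1) := hpos (q + 1) (by omega) hq
          rw [hst, esymm_cons_aux] at h2
          nlinarith
      by_cases hm : m ≤ Multiset.card t
      · have hrec := ih t hts m hm (fun p h1 h2 => hkey p h2)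
        have hfil : s.filter (fun x => 0 < x) = t.filter (fun x => 0 < x) := by
          rw [hst, Multiset.filter_cons_of_neg _ (not_lt.mpr ha0)]
        rwa [hfil]
      · have hm' : m = Multiset.card t + 1 := by omega
        have hzero : t.esymm m = 0 := by
          rw [Multiset.esymm, Multiset.powersetCard_eq_empty _ (by omega)]
          simp
        have := hkey m le_rfl
        rw [hzero] at this
        exact absurd this (lt_irrefl 0)

/-- a real symmetric `n × n` matrix in `K_m(n)` (for some `1 ≤ m ≤ n`) has at
least `m` strictly positive eigenvalues, counted with multiplicity. -/
theorem gardingCone_pos_eigenvalues (n m : ℕ) (h1 : 1 ≤ m) (h2 : m ≤ n)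
    (S : Matrix (Fin n) (Fin n) ℝ) (hS : S.IsHermitian) (hK : S ∈ gardingCone n m) :
    m ≤ (Finset.univ.filter fun i => 0 < hS.eigenvalues i).card := by
  classical
  obtain ⟨-, hpos⟩ := hK
  set μ := hS.eigenvalues with hμ
  have hcard : Multiset.card (Finset.univ.val.map μ) = n := by simp
  have hes : ∀ p, 1 ≤ p → p ≤ m → 0 < (Finset.univ.val.map μ).esymm p := by
    intro p hp1 hp2
    have h := hpos p hp1 hp2
    rwa [ptrace_eq_sum_prod_eigenvalues n S hS p (hp2.trans h2),
      ← Finset.esymm_map_val] at h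
  have hcore := core_esymm_pos (Finset.univ.val.map μ) m (by rw [hcard]; exact h2) hes
  rw [Multiset.filter_map, Multiset.card_map] at hcore
  simpa [Finset.card, Finset.filter] using hcore
end
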